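/- arXiv:2006.16068 — 5 statements merged into one kernel-verified Lean document; each statement's English description precedes it below -/
import Mathlib

section
/- Let f : ℝ × ℝ → ℝ be continuously differentiable, let p₀ : ℝ → ℝ be continuously differentiable, and let ψ : ℝ × ℝ → ℝ be twice continuously differentiable and satisfy the transport equation ∂ψ/∂t(x,t) = −f(x,t)·(∂ψ/∂x)(x,t) for all x, t. Define p(x,t) := p₀(ψ(x,t))·(∂ψ/∂x)(x,t). Then p satisfies the continuity equation of Theorem 1 in dimension d = 1: for all x, t, ∂p/∂t(x,t) = −(∂p/∂x)(x,t)·f(x,t) − p(x,t)·(∂f/∂x)(x,t), i.e. ∂p/∂t = −∂/∂x[p·f]. -/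
lemma pd_left {g : ℝ × ℝ → ℝ} {x t : ℝ} (hg : DifferentiableAt ℝ g (x, t)) :
    HasDerivAt (fun u => g (u, t)) (fderiv ℝ g (x, t) (1, 0)) x := by
  have h1 : HasDerivAt (fun u : ℝ => (u, t)) ((1 : ℝ), (0 : ℝ)) x :=
    HasDerivAt.prodMk (hasDerivAt_id x) (hasDerivAt_const x t)
  exact hg.hasFDerivAt.comp_hasDerivAt x h1

lemma pd_right {g : ℝ × ℝ → ℝ} {x t : ℝ} (hg : DifferentiableAt ℝ g (x, t)) :
    HasDerivAt (fun s => g (x, s)) (fderiv ℝ g (x, t) (0, 1)) t := by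
  have h1 : HasDerivAt (fun s : ℝ => (x, s)) ((0 : ℝ), (1 : ℝ)) t :=
    HasDerivAt.prodMk (hasDerivAt_const t x) (hasDerivAt_id t)
  exact hg.hasFDerivAt.comp_hasDerivAt t h1

/-- One-dimensional rigorous form of Theorem 1: if `ψ(·,t)` transports along the flow of
`dx/dt = f(x,t)` (i.e. `ψ` solves the transport equation `∂ψ/∂t = −f·∂ψ/∂x`), then
`p(x,t) := p₀(ψ(x,t))·∂ψ/∂x(x,t)` satisfies the continuity equation
`∂p/∂t = −∂/∂x[p·f]`. -/
theorem stmt_0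
    (f : ℝ × ℝ → ℝ) (p₀ : ℝ → ℝ) (ψ : ℝ × ℝ → ℝ)
    (hf : ContDiff ℝ 1 f) (hp₀ : ContDiff ℝ 1 p₀) (hψ : ContDiff ℝ 2 ψ)
    (htransport : ∀ x t : ℝ,
      deriv (fun s => ψ (x, s)) t = -(f (x, t)) * deriv (fun u => ψ (u, t)) x)
    (p : ℝ × ℝ → ℝ)
    (hp : ∀ x t : ℝ, p (x, t) = p₀ (ψ (x, t)) * deriv (fun u => ψ (u, t)) x) :
    ∀ x t : ℝ,
      deriv (fun s => p (x, s)) t =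
        -(deriv (fun u => p (u, t)) x) * f (x, t)
          - p (x, t) * deriv (fun u => f (u, t)) x := by
  -- basic differentiability facts
  have hψ1 : ContDiff ℝ 1 ψ := hψ.of_le (by norm_num)
  have hψd : Differentiable ℝ ψ := hψ1.differentiable one_ne_zero
  have hfd : Differentiable ℝ f := hf.differentiable one_ne_zero
  have hp₀d : Differentiable ℝ p₀ := hp₀.differentiable one_ne_zero
  have hΨ : ContDiff ℝ 1 (fderiv ℝ ψ) := hψ.fderiv_right (by norm_num)
  have hΨd : Differentiable ℝ (fderiv ℝ ψ) := hΨ.differentiable one_ne_zero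
  -- partial derivatives of ψ as functions on ℝ × ℝ
  set G : ℝ × ℝ → ℝ := fun z => fderiv ℝ ψ z ((1 : ℝ), (0 : ℝ)) with hGdef
  set H : ℝ × ℝ → ℝ := fun z => fderiv ℝ ψ z ((0 : ℝ), (1 : ℝ)) with hHdef
  have hG : ContDiff ℝ 1 G := hΨ.clm_apply contDiff_const
  have hH : ContDiff ℝ 1 H := hΨ.clm_apply contDiff_const
  have hGd : Differentiable ℝ G := hG.differentiable one_ne_zero
  have hHd : Differentiable ℝ H := hH.differentiable one_ne_zero
  -- p coincides with p₀(ψ z) * G z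
  have hpq : ∀ z : ℝ × ℝ, p z = p₀ (ψ z) * G z := by
    intro z
    have := hp z.1 z.2
    rwa [(pd_left (hψd (z.1, z.2))).deriv] at this
  -- transport equation pointwise: H = -f * G
  have hHtr : ∀ z : ℝ × ℝ, H z = -(f z) * G z := by
    intro z
    have := htransport z.1 z.2
    rwa [(pd_right (hψd (z.1, z.2))).deriv, (pd_left (hψd (z.1, z.2))).deriv] at this
  intro x t
  set z : ℝ × ℝ := (x, t) with hz
  -- second derivative of ψ at z and its symmetry
  set F'' : (ℝ × ℝ) →L[ℝ] (ℝ × ℝ) →L[ℝ] ℝ := fderiv ℝ (fderiv ℝ ψ) z with hF''def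
  have hF'' : HasFDerivAt (fderiv ℝ ψ) F'' z := (hΨd z).hasFDerivAt
  have hsymm := second_derivative_symmetric (f := ψ) (f' := fderiv ℝ ψ)
    (fun y => (hψd y).hasFDerivAt) hF''
  -- derivatives of G and H as compositions with the evaluation map
  have hGF : HasFDerivAt G
      ((ContinuousLinearMap.apply ℝ ℝ ((1 : ℝ), (0 : ℝ))).comp F'') z :=
    (ContinuousLinearMap.apply ℝ ℝ ((1 : ℝ), (0 : ℝ))).hasFDerivAt.comp z hF''
  have hHF : HasFDerivAt H
      ((ContinuousLinearMap.apply ℝ ℝ ((0 : ℝ), (1 : ℝ))).comp F'') z :=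
    (ContinuousLinearMap.apply ℝ ℝ ((0 : ℝ), (1 : ℝ))).hasFDerivAt.comp z hF''
  have eG : fderiv ℝ G z ((0 : ℝ), (1 : ℝ)) = F'' (0, 1) (1, 0) := by
    rw [hGF.fderiv]; rfl
  have eH : fderiv ℝ H z ((1 : ℝ), (0 : ℝ)) = F'' (1, 0) (0, 1) := by
    rw [hHF.fderiv]; rfl
  -- ∂H/∂x via the transport equation
  have hHx : HasDerivAt (fun u => H (u, t))
      (-(fderiv ℝ f z ((1 : ℝ), (0 : ℝ))) * G z + -(f z) * fderiv ℝ G z ((1 : ℝ), (0 : ℝ))) x := by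
    have h1 : HasDerivAt (fun u => -(f (u, t))) (-(fderiv ℝ f z ((1 : ℝ), (0 : ℝ)))) x :=
      (pd_left (hfd z)).neg
    have h2 : HasDerivAt (fun u => G (u, t)) (fderiv ℝ G z ((1 : ℝ), (0 : ℝ))) x :=
      pd_left (hGd z)
    have e : (fun u => H (u, t)) = fun u => -(f (u, t)) * G (u, t) :=
      funext fun u => hHtr (u, t)
    rw [e]
    exact h1.mul h2
  -- key mixed-derivative identity: ∂G/∂t = ∂H/∂x = -fₓ G - f Gₓ
  have key : fderiv ℝ G z ((0 : ℝ), (1 : ℝ)) =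
      -(fderiv ℝ f z ((1 : ℝ), (0 : ℝ))) * G z + -(f z) * fderiv ℝ G z ((1 : ℝ), (0 : ℝ)) := by
    rw [eG, hsymm (0, 1) (1, 0), ← eH, ← (pd_left (hHd z)).deriv, hHx.deriv]
  -- derivative of p₀ along ψ
  have hp₀ψ : HasDerivAt p₀ (deriv p₀ (ψ z)) (ψ z) := (hp₀d (ψ z)).hasDerivAt
  -- ∂p/∂t
  have hpt : HasDerivAt (fun s => p (x, s))
      (deriv p₀ (ψ z) * H z * G z + p₀ (ψ z) * fderiv ℝ G z ((0 : ℝ), (1 : ℝ))) t := by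
    have e : (fun s => p (x, s)) = fun s => p₀ (ψ (x, s)) * G (x, s) :=
      funext fun s => hpq (x, s)
    rw [e]
    have h1 : HasDerivAt (fun s => ψ (x, s)) (H z) t := pd_right (hψd z)
    have h2 : HasDerivAt (fun s => p₀ (ψ (x, s))) (deriv p₀ (ψ z) * H z) t :=
      hp₀ψ.comp t h1
    have h3 : HasDerivAt (fun s => G (x, s)) (fderiv ℝ G z ((0 : ℝ), (1 : ℝ))) t :=
      pd_right (hGd z)
    exact h2.mul h3
  -- ∂p/∂x
  have hpx : HasDerivAt (fun u => p (u, t))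
      (deriv p₀ (ψ z) * G z * G z + p₀ (ψ z) * fderiv ℝ G z ((1 : ℝ), (0 : ℝ))) x := by
    have e : (fun u => p (u, t)) = fun u => p₀ (ψ (u, t)) * G (u, t) :=
      funext fun u => hpq (u, t)
    rw [e]
    have h1 : HasDerivAt (fun u => ψ (u, t)) (G z) x := pd_left (hψd z)
    have h2 : HasDerivAt (fun u => p₀ (ψ (u, t))) (deriv p₀ (ψ z) * G z) x :=
      hp₀ψ.comp x h1
    have h3 : HasDerivAt (fun u => G (u, t)) (fderiv ℝ G z ((1 : ℝ), (0 : ℝ))) x :=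
      pd_left (hGd z)
    exact h2.mul h3
  -- assemble
  rw [hpt.deriv, hpx.deriv, (pd_left (hfd z)).deriv, hpq z, key, hHtr z]
  ring
end

section
/- Let f : ℝ × ℝ → ℝ and p : ℝ × ℝ → ℝ be such that p has a total derivative at every point and satisfies the continuity equation ∂p/∂t(x,t) = −(∂p/∂x)(x,t)·f(x,t) − p(x,t)·(∂f/∂x)(x,t) for all x, t. Let x : ℝ → ℝ be differentiable with x'(t) = f(x(t), t) for all t, and assume s ↦ (∂f/∂x)(x(s), s) is continuous. Then for all t, p(x(t), t) = p(x(0), 0) · exp( −∫₀ᵗ (∂f/∂x)(x(s), s) ds ). -/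
/-- Explicit representation of the density along a characteristic:
`p(x(t),t) = p(x(0),0) · exp(−∫₀ᵗ (∂f/∂x)(x(s),s) ds)`. -/
theorem stmt_3
    (f p : ℝ × ℝ → ℝ)
    (hp : ∀ z : ℝ × ℝ, DifferentiableAt ℝ p z)
    (hpde : ∀ x t : ℝ,
      deriv (fun s => p (x, s)) t =
        -(deriv (fun u => p (u, t)) x) * f (x, t)
          - p (x, t) * deriv (fun u => f (u, t)) x)
    (x : ℝ → ℝ) (hx : ∀ t, HasDerivAt x (f (x t, t)) t)
    (hcont : Continuous fun s => deriv (fun u => f (u, s)) (x s)) :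
    ∀ t : ℝ,
      p (x t, t) = p (x 0, 0) * Real.exp (-∫ s in (0 : ℝ)..t, deriv (fun u => f (u, s)) (x s)) := by
  intro t
  set a : ℝ → ℝ := fun s => deriv (fun u => f (u, s)) (x s) with ha
  set A : ℝ → ℝ := fun t => ∫ s in (0:ℝ)..t, a s with hAdef
  have hA' : ∀ t, HasDerivAt A (a t) t := fun t =>
    (hcont.integral_hasStrictDerivAt 0 t).hasDerivAt
  set g : ℝ → ℝ := fun t => p (x t, t) with hg
  have hg' : ∀ t, HasDerivAt g (-(g t) * a t) t := by
    intro t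
    have hfd := (hp (x t, t)).hasFDerivAt
    have hxy : HasDerivAt (fun s => (x s, s)) (f (x t, t), 1) t :=
      HasDerivAt.prodMk (hx t) (hasDerivAt_id t)
    have hcomp := HasFDerivAt.comp_hasDerivAt (f := fun s => (x s, s)) t hfd hxy
    have h1 : HasDerivAt (fun u => p (u, t)) (fderiv ℝ p (x t, t) (1, 0)) (x t) := by
      have h : HasDerivAt (fun u : ℝ => (u, t)) ((1:ℝ), (0:ℝ)) (x t) :=
        HasDerivAt.prodMk (hasDerivAt_id (x t)) (hasDerivAt_const _ _)
      exact HasFDerivAt.comp_hasDerivAt (f := fun u : ℝ => (u, t)) _ hfd h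
    have h2 : HasDerivAt (fun s => p (x t, s)) (fderiv ℝ p (x t, t) (0, 1)) t := by
      have h : HasDerivAt (fun s : ℝ => ((x t : ℝ), s)) ((0:ℝ), (1:ℝ)) t :=
        HasDerivAt.prodMk (hasDerivAt_const _ _) (hasDerivAt_id t)
      exact HasFDerivAt.comp_hasDerivAt (f := fun s : ℝ => ((x t : ℝ), s)) _ hfd h
    have key : fderiv ℝ p (x t, t) (f (x t, t), 1) = -(g t) * a t := by
      have e : (f (x t, t), (1:ℝ)) = f (x t, t) • ((1:ℝ), (0:ℝ)) + ((0:ℝ), (1:ℝ)) := by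
        simp [Prod.ext_iff]
      rw [e, map_add, map_smul]
      simp only [smul_eq_mul, hg, ha]
      rw [← h2.deriv, hpde (x t) t, h1.deriv]
      ring
    rw [key] at hcomp
    exact hcomp
  have hF' : ∀ t, HasDerivAt (fun t => g t * Real.exp (A t)) 0 t := by
    intro t
    have := HasDerivAt.mul (hg' t) (HasDerivAt.exp (hA' t))
    refine this.congr_deriv ?_
    ring
  have hconst : ∀ s u : ℝ, g s * Real.exp (A s) = g u * Real.exp (A u) :=
    is_const_of_deriv_eq_zero (fun s => (hF' s).differentiableAt)
      (fun s => (hF' s).deriv)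
  have h0 : A 0 = 0 := intervalIntegral.integral_same
  have hst := hconst t 0
  rw [h0, Real.exp_zero, mul_one] at hst
  have : g t = g 0 * Real.exp (-A t) := by
    have hpos := Real.exp_pos (A t)
    field_simp [Real.exp_neg]
    rw [Real.exp_neg, ← hst]
    field_simp
  simpa [hg, hAdef, ha] using this
end

section
/- Let f : ℝ × ℝ → ℝ and p : ℝ × ℝ → ℝ be such that p has a total derivative at every point and satisfies the continuity equation ∂p/∂t(x,t) = −(∂p/∂x)(x,t)·f(x,t) − p(x,t)·(∂f/∂x)(x,t) for all x, t. Let x : ℝ → ℝ be differentiable with x'(t) = f(x(t), t) for all t, and assume s ↦ (∂f/∂x)(x(s), s) is continuous. Then for every t: if p(x(0),0) ≥ 0 then p(x(t),t) ≥ 0; if p(x(0),0) = 0 then p(x(t),t) = 0; and if p(x(0),0) > 0 then p(x(t),t) > 0. -/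
/-- Sign preservation along characteristics for the 1-D continuity equation:
nonnegativity, vanishing, and strict positivity of the density are preserved along
the trajectory of an agent obeying `dx/dt = f(x,t)`. -/
theorem stmt_4
    (f p : ℝ × ℝ → ℝ)
    (hp : ∀ z : ℝ × ℝ, DifferentiableAt ℝ p z)
    (hpde : ∀ x t : ℝ,
      deriv (fun s => p (x, s)) t =
        -(deriv (fun u => p (u, t)) x) * f (x, t)
          - p (x, t) * deriv (fun u => f (u, t)) x)
    (x : ℝ → ℝ) (hx : ∀ t, HasDerivAt x (f (x t, t)) t)
    (hcont : Continuous fun s => deriv (fun u => f (u, s)) (x s)) :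
    ∀ t : ℝ,
      (0 ≤ p (x 0, 0) → 0 ≤ p (x t, t)) ∧
      (p (x 0, 0) = 0 → p (x t, t) = 0) ∧
      (0 < p (x 0, 0) → 0 < p (x t, t)) := by
  set a : ℝ → ℝ := fun s => deriv (fun u => f (u, s)) (x s) with ha
  set g : ℝ → ℝ := fun t => p (x t, t) with hg
  -- derivative of g
  have hg' : ∀ t, HasDerivAt g (-(g t) * a t) t := by
    intro t
    have hcurve : HasDerivAt (fun s => (x s, s)) (f (x t, t), 1) t :=
      (hx t).prodMk (hasDerivAt_id t)
    have hgd : HasDerivAt (fun s => p (x s, s)) ((fderiv ℝ p (x t, t)) (f (x t, t), 1)) t :=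
      ((hp (x t, t)).hasFDerivAt).comp_hasDerivAt_of_eq t hcurve rfl
    -- partial derivatives
    have hxd : deriv (fun u => p (u, t)) (x t) = (fderiv ℝ p (x t, t)) (1, 0) := by
      have h1 : HasDerivAt (fun u : ℝ => (u, t)) ((1 : ℝ), (0 : ℝ)) (x t) :=
        (hasDerivAt_id (x t)).prodMk (hasDerivAt_const (x t) t)
      exact (((hp (x t, t)).hasFDerivAt).comp_hasDerivAt (x t) h1).deriv
    have htd : deriv (fun s => p (x t, s)) t = (fderiv ℝ p (x t, t)) (0, 1) := by
      have h1 : HasDerivAt (fun s : ℝ => (x t, s)) ((0 : ℝ), (1 : ℝ)) t :=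
        (hasDerivAt_const t (x t)).prodMk (hasDerivAt_id t)
      exact (((hp (x t, t)).hasFDerivAt).comp_hasDerivAt t h1).deriv
    have hsplit : (fderiv ℝ p (x t, t)) (f (x t, t), 1)
        = f (x t, t) * (fderiv ℝ p (x t, t)) (1, 0) + (fderiv ℝ p (x t, t)) (0, 1) := by
      have : (f (x t, t), (1 : ℝ)) = f (x t, t) • ((1 : ℝ), (0 : ℝ)) + ((0 : ℝ), (1 : ℝ)) := by
        simp [Prod.ext_iff]
      rw [this, map_add, map_smul]
      simp [smul_eq_mul]
    have hkey : (fderiv ℝ p (x t, t)) (f (x t, t), 1) = -(g t) * a t := by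
      rw [hsplit, ← hxd, ← htd]
      have := hpde (x t) t
      rw [this]
      ring
    rw [hkey] at hgd
    exact hgd
  -- integral of a
  set A : ℝ → ℝ := fun t => ∫ s in (0:ℝ)..t, a s with hA
  have hA' : ∀ t, HasDerivAt A (a t) t := fun t =>
    (hcont.integral_hasStrictDerivAt 0 t).hasDerivAt
  set h : ℝ → ℝ := fun t => g t * Real.exp (A t) with hh
  have hh' : ∀ t, HasDerivAt h 0 t := by
    intro t
    have := (hg' t).mul ((hA' t).exp)
    exact this.congr_deriv (by ring)
  have hconst : ∀ t, h t = h 0 := by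
    intro t
    have hd : Differentiable ℝ h := fun t => (hh' t).differentiableAt
    have hz : ∀ t, deriv h t = 0 := fun t => (hh' t).deriv
    exact is_const_of_deriv_eq_zero hd hz t 0
  have hA0 : A 0 = 0 := by simp [hA]
  have hgt : ∀ t, g t = g 0 * Real.exp (-(A t)) := by
    intro t
    have := hconst t
    simp only [hh, hA0, Real.exp_zero, mul_one] at this
    rw [Real.exp_neg]
    field_simp
    linarith [this]
  intro t
  have hexp : 0 < Real.exp (-(A t)) := Real.exp_pos _
  refine ⟨fun h0 => ?_, fun h0 => ?_, fun h0 => ?_⟩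
  · show 0 ≤ g t; rw [hgt t]; positivity
  · show g t = 0
    have h0' : g 0 = 0 := h0
    rw [hgt t, h0', zero_mul]
  · show 0 < g t; rw [hgt t]; positivity
end

section
/- Let r₁, r₂ : ℝ → ℝ and let p : ℝ × ℝ → ℝ together with its first-order partial derivatives be continuous on [0,1] × ℝ and satisfy the Cross-learning population PDE ∂p/∂t(π,t) = −∂/∂π[ p(π,t)·π·(1−π)·(r₁(t)−r₂(t)) ] for all π ∈ [0,1] and all t. Fix t and suppose p(π,t) ≥ 0 for all π ∈ [0,1]. Then the derivative of E[π₁(t)] := ∫₀¹ π·p(π,t) dπ at time t is nonnegative if r₁(t) ≥ r₂(t), and nonpositive if r₁(t) ≤ r₂(t). That is, the expected probability of taking the first action changes in the direction of the higher immediate reward. -/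
open Set intervalIntegral MeasureTheory Metric

/-- The expected probability of taking the first action changes in the direction of the
higher immediate reward: if `p(·,t) ≥ 0` on `[0,1]`, then the derivative of
`E[π₁(t)] = ∫₀¹ π·p(π,t) dπ` at `t` is nonnegative when `r₁(t) ≥ r₂(t)` and
nonpositive when `r₁(t) ≤ r₂(t)`. -/
theorem stmt_7
    (r₁ r₂ : ℝ → ℝ) (p px pt : ℝ × ℝ → ℝ)
    (hpx : ∀ x t : ℝ, HasDerivAt (fun u => p (u, t)) (px (x, t)) x)
    (hpt : ∀ x t : ℝ, HasDerivAt (fun s => p (x, s)) (pt (x, t)) t)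
    (hpc : ContinuousOn p (Set.Icc 0 1 ×ˢ Set.univ))
    (hpxc : ContinuousOn px (Set.Icc 0 1 ×ˢ Set.univ))
    (hptc : ContinuousOn pt (Set.Icc 0 1 ×ˢ Set.univ))
    (hpde : ∀ π ∈ Set.Icc (0 : ℝ) 1, ∀ s : ℝ,
      pt (π, s) =
        -(px (π, s) * (π * (1 - π) * (r₁ s - r₂ s))
            + p (π, s) * ((1 - 2 * π) * (r₁ s - r₂ s))))
    (t : ℝ) (hnn : ∀ π ∈ Set.Icc (0 : ℝ) 1, 0 ≤ p (π, t)) :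
    (r₂ t ≤ r₁ t → 0 ≤ deriv (fun s => ∫ π in (0 : ℝ)..1, π * p (π, s)) t) ∧
    (r₁ t ≤ r₂ t → deriv (fun s => ∫ π in (0 : ℝ)..1, π * p (π, s)) t ≤ 0) := by
  have h01 : (0:ℝ) ≤ 1 := zero_le_one
  have huIcc : Set.uIcc (0:ℝ) 1 = Set.Icc 0 1 := Set.uIcc_of_le h01
  -- continuity of slices
  have slice : ∀ s : ℝ, ContinuousOn (fun π : ℝ => (π, s)) (Set.Icc (0:ℝ) 1) := by
    intro s; fun_prop
  have mapsTo : ∀ s : ℝ, Set.MapsTo (fun π : ℝ => (π, s)) (Set.Icc (0:ℝ) 1)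
      (Set.Icc (0:ℝ) 1 ×ˢ Set.univ) := fun s π hπ => ⟨hπ, trivial⟩
  have cpt : ∀ s : ℝ, ContinuousOn (fun π => pt (π, s)) (Set.Icc (0:ℝ) 1) :=
    fun s => hptc.comp (slice s) (mapsTo s)
  have cpx : ∀ s : ℝ, ContinuousOn (fun π => px (π, s)) (Set.Icc (0:ℝ) 1) :=
    fun s => hpxc.comp (slice s) (mapsTo s)
  have cp : ∀ s : ℝ, Continuous (fun π => p (π, s)) :=
    fun s => continuous_iff_continuousAt.mpr fun π => (hpx π s).continuousAt
  -- bound for pt on compact set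
  have hK : IsCompact (Set.Icc (0:ℝ) 1 ×ˢ Set.Icc (t-1) (t+1)) :=
    isCompact_Icc.prod isCompact_Icc
  obtain ⟨C, hC⟩ := hK.exists_bound_of_continuousOn
    (hptc.mono (Set.prod_mono_right (Set.subset_univ _)))
  -- derivative under the integral sign
  have key : HasDerivAt (fun s => ∫ π in (0:ℝ)..1, π * p (π, s))
      (∫ π in (0:ℝ)..1, π * pt (π, t)) t := by
    refine (intervalIntegral.hasDerivAt_integral_of_dominated_loc_of_deriv_le
      (F := fun s π => π * p (π, s)) (F' := fun s π => π * pt (π, s))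
      (bound := fun _ => C) (Metric.ball_mem_nhds t one_pos) ?_ ?_ ?_ ?_ ?_ ?_).2
    · filter_upwards with s
      exact (continuous_id.mul (cp s)).aestronglyMeasurable
    · exact (continuous_id.mul (cp t)).intervalIntegrable 0 1
    · refine ((continuousOn_id.mul (cpt t)).mono ?_).aestronglyMeasurable
        measurableSet_uIoc
      rw [Set.uIoc_of_le h01]; exact Set.Ioc_subset_Icc_self
    · filter_upwards with π hπ s hs
      rw [Set.uIoc_of_le h01] at hπ
      have hπ' : π ∈ Set.Icc (0:ℝ) 1 := Set.Ioc_subset_Icc_self hπ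
      have hs' : s ∈ Set.Icc (t-1) (t+1) := by
        rw [Real.ball_eq_Ioo] at hs
        exact ⟨hs.1.le, hs.2.le⟩
      have := hC (π, s) ⟨hπ', hs'⟩
      calc ‖π * pt (π, s)‖ = |π| * ‖pt (π, s)‖ := by rw [norm_mul]; rfl
        _ ≤ 1 * C := by
            apply mul_le_mul (abs_le.mpr ⟨by linarith [hπ'.1], hπ'.2⟩) this (norm_nonneg _)
              zero_le_one
        _ = C := one_mul C
    · exact intervalIntegrable_const
    · filter_upwards with π _ s _
      exact (hpt π s).const_mul π
  rw [key.deriv]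
  set Δ := r₁ t - r₂ t with hΔ
  -- g and its derivative
  set g : ℝ → ℝ := fun π => (π^2 - π^3) * p (π, t) * Δ with hg
  set g' : ℝ → ℝ := fun π => ((2*π - 3*π^2) * p (π, t) + (π^2 - π^3) * px (π, t)) * Δ with hg'
  have hgderiv : ∀ π ∈ Set.uIcc (0:ℝ) 1, HasDerivAt g (g' π) π := by
    intro π _
    have h1 : HasDerivAt (fun π : ℝ => π^2 - π^3) (2*π - 3*π^2) π := by
      have := ((hasDerivAt_pow 2 π).sub (hasDerivAt_pow 3 π))
      exact this.congr_deriv (by push_cast; ring)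
    have := (h1.mul (hpx π t)).mul_const Δ
    exact this
  have hg'cont : ContinuousOn g' (Set.Icc (0:ℝ) 1) := by
    apply ContinuousOn.mul _ continuousOn_const
    exact ((Continuous.continuousOn (by fun_prop)).mul ((cp t).continuousOn)).add
      ((Continuous.continuousOn (by fun_prop)).mul (cpx t))
  have hg'int : IntervalIntegrable g' MeasureTheory.volume 0 1 :=
    (hg'cont.mono (by rw [huIcc])).intervalIntegrable
  have hg'integral : ∫ π in (0:ℝ)..1, g' π = 0 := by
    rw [intervalIntegral.integral_eq_sub_of_hasDerivAt hgderiv hg'int]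
    simp [hg]
  -- rewrite integrand
  set h : ℝ → ℝ := fun π => Δ * (π * (1 - π) * p (π, t)) with hh
  have hint : IntervalIntegrable h MeasureTheory.volume 0 1 := by
    apply Continuous.intervalIntegrable
    exact continuous_const.mul ((by fun_prop : Continuous fun π : ℝ => π * (1-π)).mul (cp t))
  have heq : ∀ π ∈ Set.uIcc (0:ℝ) 1, π * pt (π, t) = h π - g' π := by
    intro π hπ
    rw [huIcc] at hπ
    rw [hpde π hπ t]
    simp only [hh, hg']
    ring
  have hcalc : (∫ π in (0:ℝ)..1, π * pt (π, t))
      = Δ * ∫ π in (0:ℝ)..1, π * (1 - π) * p (π, t) := by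
    rw [intervalIntegral.integral_congr heq,
      intervalIntegral.integral_sub hint hg'int, hg'integral, sub_zero, hh,
      intervalIntegral.integral_const_mul]
  rw [hcalc]
  have hI : 0 ≤ ∫ π in (0:ℝ)..1, π * (1 - π) * p (π, t) := by
    apply intervalIntegral.integral_nonneg h01
    intro π hπ
    exact mul_nonneg (mul_nonneg hπ.1 (by linarith [hπ.2])) (hnn π hπ)
  constructor
  · intro hr; exact mul_nonneg (by simp [hΔ]; linarith) hI
  · intro hr; exact mul_nonpos_of_nonpos_of_nonneg (by simp [hΔ]; linarith) hI
end

section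
/- Let r₁, r₂ : ℝ → ℝ and let p : ℝ × ℝ → ℝ together with its first-order partial derivatives be continuous on [0,1] × ℝ and satisfy the Cross-learning population PDE ∂p/∂t(π,t) = −∂/∂π[ p(π,t)·π·(1−π)·(r₁(t)−r₂(t)) ] for all π ∈ [0,1] and all t. Fix t and suppose p(π,t) ≥ 0 for all π ∈ [0,1] and ∫₀¹ p(π,t) dπ = 1. Then the derivative of E[π₁(t)] := ∫₀¹ π·p(π,t) dπ at time t satisfies |d/dt E[π₁(t)]| ≤ |r₁(t) − r₂(t)| / 4. -/
/-- Quantified version of the paper's observation on the magnitude of the drift of the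
expected probability: if `p(·,t)` is a probability density on `[0,1]`, then
`|d/dt E[π₁(t)]| ≤ |r₁(t) − r₂(t)| / 4`, since `|π(π−1)| ≤ 1/4` on `[0,1]`. -/
theorem stmt_8
    (r₁ r₂ : ℝ → ℝ) (p px pt : ℝ × ℝ → ℝ)
    (hpx : ∀ x t : ℝ, HasDerivAt (fun u => p (u, t)) (px (x, t)) x)
    (hpt : ∀ x t : ℝ, HasDerivAt (fun s => p (x, s)) (pt (x, t)) t)
    (hpc : ContinuousOn p (Set.Icc 0 1 ×ˢ Set.univ))
    (hpxc : ContinuousOn px (Set.Icc 0 1 ×ˢ Set.univ))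
    (hptc : ContinuousOn pt (Set.Icc 0 1 ×ˢ Set.univ))
    (hpde : ∀ π ∈ Set.Icc (0 : ℝ) 1, ∀ s : ℝ,
      pt (π, s) =
        -(px (π, s) * (π * (1 - π) * (r₁ s - r₂ s))
            + p (π, s) * ((1 - 2 * π) * (r₁ s - r₂ s))))
    (t : ℝ) (hnn : ∀ π ∈ Set.Icc (0 : ℝ) 1, 0 ≤ p (π, t))
    (hmass : ∫ π in (0 : ℝ)..1, p (π, t) = 1) :
    |deriv (fun s => ∫ π in (0 : ℝ)..1, π * p (π, s)) t| ≤ |r₁ t - r₂ t| / 4 := by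
  -- continuity of slices
  have hpcont : ∀ s : ℝ, Continuous (fun u => p (u, s)) := fun s =>
    continuous_iff_continuousAt.2 fun u => (hpx u s).continuousAt
  have hemb : ∀ s : ℝ, Continuous (fun u : ℝ => ((u, s) : ℝ × ℝ)) := fun s =>
    continuous_id.prodMk continuous_const
  have hmaps : ∀ s : ℝ, Set.MapsTo (fun u : ℝ => ((u, s) : ℝ × ℝ)) (Set.Icc 0 1)
      (Set.Icc 0 1 ×ˢ Set.univ) := fun s u hu => ⟨hu, Set.mem_univ _⟩
  have hpxcont : ContinuousOn (fun u => px (u, t)) (Set.Icc 0 1) :=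
    hpxc.comp ((hemb t).continuousOn) (hmaps t)
  have hptcont : ContinuousOn (fun u => pt (u, t)) (Set.Icc 0 1) :=
    hptc.comp ((hemb t).continuousOn) (hmaps t)
  -- bound for pt on a compact product neighborhood
  obtain ⟨C, hC⟩ : ∃ C : ℝ, ∀ z ∈ Set.Icc (0:ℝ) 1 ×ˢ Set.Icc (t-1) (t+1), ‖pt z‖ ≤ C := by
    rcases (isCompact_Icc.prod isCompact_Icc).exists_bound_of_continuousOn
      (hptc.mono (by intro z hz; exact ⟨hz.1, Set.mem_univ _⟩)) with ⟨C, hC⟩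
    exact ⟨C, hC⟩
  -- derivative under the integral sign
  have key : HasDerivAt (fun s => ∫ π in (0:ℝ)..1, π * p (π, s))
      (∫ π in (0:ℝ)..1, π * pt (π, t)) t := by
    have := (intervalIntegral.hasDerivAt_integral_of_dominated_loc_of_deriv_le
      (F := fun s π => π * p (π, s)) (F' := fun s π => π * pt (π, s))
      (x₀ := t) (a := 0) (b := 1) (bound := fun _ => C) (μ := MeasureTheory.volume)
      (s := Metric.ball t 1) (Metric.ball_mem_nhds t one_pos)
      ?_ ?_ ?_ ?_ ?_ ?_).2
    · exact this
    · filter_upwards with s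
      exact ((continuous_id.mul (hpcont s)).aestronglyMeasurable).restrict
    · exact (continuous_id.mul (hpcont t)).intervalIntegrable 0 1
    · apply ContinuousOn.aestronglyMeasurable ?_ measurableSet_uIoc
      have : Set.uIoc (0:ℝ) 1 ⊆ Set.Icc 0 1 := by
        rw [Set.uIoc_of_le (by norm_num : (0:ℝ) ≤ 1)]
        exact Set.Ioc_subset_Icc_self
      exact (continuousOn_id.mul (hptcont.mono this))
    · filter_upwards with π hπ s hs
      have hπ' : π ∈ Set.Icc (0:ℝ) 1 := by
        rw [Set.uIoc_of_le (by norm_num : (0:ℝ) ≤ 1)] at hπ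
        exact Set.Ioc_subset_Icc_self hπ
      have hd : |s - t| < 1 := by simpa [Real.dist_eq] using hs
      have hd1 := abs_lt.1 hd
      have hs' : s ∈ Set.Icc (t-1) (t+1) := ⟨by linarith [hd1.1], by linarith [hd1.2]⟩
      calc ‖π * pt (π, s)‖ = |π| * ‖pt (π, s)‖ := by rw [norm_mul]; rfl
        _ ≤ 1 * C := by
            apply mul_le_mul (by rw [abs_of_nonneg hπ'.1]; exact hπ'.2)
              (hC _ ⟨hπ', hs'⟩) (norm_nonneg _) one_pos.le
        _ = C := one_mul C
    · exact intervalIntegrable_const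
    · filter_upwards with π hπ s hs
      exact (hpt π s).const_mul π
  rw [key.deriv]
  set Δ : ℝ := r₁ t - r₂ t with hΔ
  -- Φ π = (π^2 * (1 - π) * Δ) * p(π,t), Φ' = (2π - 3π²)Δ p + π²(1-π)Δ px
  set Φ : ℝ → ℝ := fun π => (π^2 * (1 - π) * Δ) * p (π, t) with hΦ
  have hpoly1 : Continuous (fun u : ℝ => (2*u - 3*u^2) * Δ) :=
    (((continuous_const.mul continuous_id).sub
      (continuous_const.mul (continuous_pow 2)))).mul continuous_const
  have hpoly2 : Continuous (fun u : ℝ => u^2 * (1 - u) * Δ) :=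
    (((continuous_pow 2).mul (continuous_const.sub continuous_id))).mul continuous_const
  have hpoly4 : Continuous (fun u : ℝ => u - u^2) :=
    continuous_id.sub (continuous_pow 2)
  have hpoly3 : Continuous (fun u : ℝ => (u - u^2) * Δ) := hpoly4.mul continuous_const
  have hΦ' : ∀ π : ℝ, HasDerivAt Φ
      ((2*π - 3*π^2) * Δ * p (π, t) + (π^2 * (1 - π) * Δ) * px (π, t)) π := by
    intro π
    have h1 : HasDerivAt (fun u : ℝ => u^2 * (1 - u) * Δ) ((2*π - 3*π^2) * Δ) π := by
      have hfun : (fun u : ℝ => u^2 * (1 - u) * Δ) = fun u => (u^2 - u^3) * Δ := by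
        funext u; ring
      rw [hfun]
      have h := ((hasDerivAt_pow 2 π).sub (hasDerivAt_pow 3 π)).mul_const Δ
      refine h.congr_deriv ?_
      push_cast; ring
    exact h1.mul (hpx π t)
  have hcontΦ' : ContinuousOn
      (fun π => (2*π - 3*π^2) * Δ * p (π, t) + (π^2 * (1 - π) * Δ) * px (π, t))
      (Set.Icc 0 1) :=
    (hpoly1.continuousOn.mul ((hpcont t).continuousOn)).add
      (hpoly2.continuousOn.mul hpxcont)
  -- the integrand equals -Φ' + (π - π²) Δ p on Icc 0 1
  have hcong : Set.EqOn (fun π => π * pt (π, t))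
      (fun π => -((2*π - 3*π^2) * Δ * p (π, t) + (π^2 * (1 - π) * Δ) * px (π, t))
        + (π - π^2) * Δ * p (π, t)) (Set.uIcc (0:ℝ) 1) := by
    intro π hπ
    rw [Set.uIcc_of_le (by norm_num : (0:ℝ) ≤ 1)] at hπ
    show π * pt (π, t) = _
    rw [hpde π hπ t, ← hΔ]
    ring
  have hint1 : ∫ π in (0:ℝ)..1, π * pt (π, t)
      = (∫ π in (0:ℝ)..1, -((2*π - 3*π^2) * Δ * p (π, t) + (π^2 * (1 - π) * Δ) * px (π, t)))
        + ∫ π in (0:ℝ)..1, (π - π^2) * Δ * p (π, t) := by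
    rw [intervalIntegral.integral_congr hcong]
    apply intervalIntegral.integral_add
    · apply ContinuousOn.intervalIntegrable
      rw [Set.uIcc_of_le (by norm_num : (0:ℝ) ≤ 1)]
      exact hcontΦ'.neg
    · exact (hpoly3.continuousOn.mul ((hpcont t).continuousOn)).intervalIntegrable
  have hftc : ∫ π in (0:ℝ)..1,
      ((2*π - 3*π^2) * Δ * p (π, t) + (π^2 * (1 - π) * Δ) * px (π, t)) = Φ 1 - Φ 0 := by
    apply intervalIntegral.integral_eq_sub_of_hasDerivAt
    · intro π _; exact hΦ' π
    · apply ContinuousOn.intervalIntegrable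
      rw [Set.uIcc_of_le (by norm_num : (0:ℝ) ≤ 1)]
      exact hcontΦ'
  have hΦ0 : Φ 0 = 0 := by simp [hΦ]
  have hΦ1 : Φ 1 = 0 := by simp [hΦ]
  have hint2 : ∫ π in (0:ℝ)..1, π * pt (π, t)
      = Δ * ∫ π in (0:ℝ)..1, (π - π^2) * p (π, t) := by
    rw [hint1, intervalIntegral.integral_neg, hftc, hΦ1, hΦ0]
    rw [← intervalIntegral.integral_const_mul]
    simp only [sub_zero, neg_zero, zero_add]
    congr 1; funext π; ring
  rw [hint2]
  -- bound the remaining integral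
  have hInn : 0 ≤ ∫ π in (0:ℝ)..1, (π - π^2) * p (π, t) := by
    apply intervalIntegral.integral_nonneg (by norm_num)
    intro π hπ
    have h1 : 0 ≤ π - π^2 := by nlinarith [hπ.1, hπ.2]
    exact mul_nonneg h1 (hnn π hπ)
  have hIle : (∫ π in (0:ℝ)..1, (π - π^2) * p (π, t)) ≤ 1 / 4 := by
    have hmono : (∫ π in (0:ℝ)..1, (π - π^2) * p (π, t))
        ≤ ∫ π in (0:ℝ)..1, (1/4 : ℝ) * p (π, t) := by
      apply intervalIntegral.integral_mono_on (by norm_num)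
      · exact (hpoly4.continuousOn.mul
          ((hpcont t).continuousOn)).intervalIntegrable
      · exact ((continuous_const.mul (hpcont t)).intervalIntegrable 0 1)
      · intro π hπ
        have h1 : π - π^2 ≤ 1/4 := by nlinarith [sq_nonneg (π - 1/2)]
        exact mul_le_mul_of_nonneg_right h1 (hnn π hπ)
    rw [intervalIntegral.integral_const_mul, hmass] at hmono
    linarith
  rw [abs_mul]
  calc |Δ| * |∫ π in (0:ℝ)..1, (π - π^2) * p (π, t)|
      = |Δ| * ∫ π in (0:ℝ)..1, (π - π^2) * p (π, t) := by rw [abs_of_nonneg hInn]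
    _ ≤ |Δ| * (1/4) := mul_le_mul_of_nonneg_left hIle (abs_nonneg _)
    _ = |Δ| / 4 := by ring
end
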